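/- Let (T,X) and (T,Y) be two minimal semiflows. If π : (T,X) → (T,Y) is an almost 1-1 epimorphism and (T,Y) is equicontinuous and surjective, then (T,X) is an a.a. semiflow and {x ∈ X : π⁻¹[{π(x)}] = {x}} ⊆ P_aa(T,X). -/

import Mathlib

open Filter Topology Set Uniformity

universe u v w

section Core

variable {T : Type u} {X : Type v}

/-- `A ⊆ T` is (right) syndetic in `T`: there is a compact `K ⊆ T` with `Kt ∩ A ≠ ∅`
for every `t ∈ T`. -/
def Syndetic [Mul T] [TopologicalSpace T] (A : Set T) : Prop :=
  ∃ K : Set T, IsCompact K ∧ ∀ t : T, ∃ k ∈ K, k * t ∈ A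

/-- `A ⊆ T` is discretely syndetic: there is a finite `K ⊆ T` with `Kt ∩ A ≠ ∅`
for every `t ∈ T`. -/
def DiscSyndetic [Mul T] (A : Set T) : Prop :=
  ∃ K : Set T, K.Finite ∧ ∀ t : T, ∃ k ∈ K, k * t ∈ A

/-- `x` is an almost automorphic (a.a.) point for the action `act : T → X → X`:
for every net `{t_n}` in `T`, every `y, x' ∈ X` and every net `{x'_n}` in `X` with
`t_n x → y`, `x'_n → x'` and `t_n x'_n = y` for all `n`, one has `x = x'`. -/
def IsAAPointVia [TopologicalSpace X] (act : T → X → X) (x : X) : Prop :=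
  ∀ (ι : Type w) [Preorder ι] [IsDirected ι (· ≤ ·)] [Nonempty ι]
    (t : ι → T) (xn : ι → X) (y x' : X),
    Tendsto (fun n => act (t n) x) atTop (𝓝 y) →
    Tendsto xn atTop (𝓝 x') →
    (∀ n, act (t n) (xn n) = y) → x = x'

/-- `x` is proximal to `y`: there is a net `{t_n}` in `T` with `lim t_n x = lim t_n y`. -/
def ProximalVia [TopologicalSpace X] (act : T → X → X) (x y : X) : Prop :=
  ∃ (ι : Type w) (pι : Preorder ι),
    letI := pι
    IsDirected ι (· ≤ ·) ∧ Nonempty ι ∧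
      ∃ (t : ι → T) (z : X),
        Tendsto (fun n => act (t n) x) atTop (𝓝 z) ∧
        Tendsto (fun n => act (t n) y) atTop (𝓝 z)

/-- The orbit `Tx`. -/
def orbitVia (act : T → X → X) (x : X) : Set X := Set.range fun t => act t x

/-- `x` is a distal point: the only point of `cls(Tx)` proximal to `x` is `x` itself. -/
def DistalPtVia [TopologicalSpace X] (act : T → X → X) (x : X) : Prop :=
  ∀ y ∈ closure (orbitVia act x), ProximalVia.{u,v,w} act x y → y = x

/-- `x` is a locally almost periodic (l.a.p.) point. -/
def LapPtVia [Mul T] [TopologicalSpace T] [TopologicalSpace X] (act : T → X → X) (x : X) : Prop :=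
  ∀ U ∈ 𝓝 x, ∃ V ∈ 𝓝 x, ∃ A : Set T, Syndetic A ∧ ∀ a ∈ A, ∀ v ∈ V, act a v ∈ U

/-- `x` is regionally proximal to `x'`. -/
def RegProximalVia [TopologicalSpace X] (act : T → X → X) (x x' : X) : Prop :=
  ∃ (ι : Type w) (pι : Preorder ι),
    letI := pι
    IsDirected ι (· ≤ ·) ∧ Nonempty ι ∧
      ∃ (t : ι → T) (xn x'n : ι → X) (z : X),
        Tendsto xn atTop (𝓝 x) ∧ Tendsto x'n atTop (𝓝 x') ∧
        Tendsto (fun n => act (t n) (xn n)) atTop (𝓝 z) ∧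
        Tendsto (fun n => act (t n) (x'n n)) atTop (𝓝 z)

/-- `(x,y) ∈ Q⁻`. -/
def QMinusVia [TopologicalSpace X] (act : T → X → X) (x y : X) : Prop :=
  ∃ (ι : Type w) (pι : Preorder ι),
    letI := pι
    IsDirected ι (· ≤ ·) ∧ Nonempty ι ∧
      ∃ (t : ι → T) (xn yn : ι → X) (z : X),
        Tendsto xn atTop (𝓝 z) ∧ Tendsto yn atTop (𝓝 z) ∧
        Tendsto (fun n => act (t n) (xn n)) atTop (𝓝 x) ∧
        Tendsto (fun n => act (t n) (yn n)) atTop (𝓝 y)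

/-- The semiflow is equicontinuous. -/
def EquicontSF [UniformSpace X] (act : T → X → X) : Prop :=
  ∀ ε ∈ 𝓤 X, ∃ δ ∈ 𝓤 X, ∀ p : X × X, p ∈ δ → ∀ t : T, (act t p.1, act t p.2) ∈ ε

/-- The semiflow is almost periodic: for each entourage `ε` there is a syndetic `A ⊆ T`
with `Ax ⊆ ε[x]` for all `x`. -/
def APSF [Mul T] [TopologicalSpace T] [UniformSpace X] (act : T → X → X) : Prop :=
  ∀ ε ∈ 𝓤 X, ∃ A : Set T, Syndetic A ∧ ∀ a ∈ A, ∀ x : X, (x, act a x) ∈ ε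

/-- The semiflow is minimal: every orbit is dense. -/
def MinimalSF [TopologicalSpace X] (act : T → X → X) : Prop :=
  ∀ x : X, Dense (orbitVia act x)

/-- `T` is an almost right C-semigroup. -/
def AlmostRightC (T : Type*) [Mul T] [TopologicalSpace T] : Prop :=
  Dense {t : T | IsCompact (closure ((Set.range fun s : T => s * t)ᶜ))}

end Core

section AAAux

universe u' v' w' x'

variable {T : Type u'} {Y : Type v'} [Monoid T] [UniformSpace Y] [MulAction T Y]

/-- From equicontinuity: inside any entourage there is a symmetric entourage invariant
under the action. -/
lemma exists_invariant_core (hYeq : EquicontSF fun (t : T) (z : Y) => t • z)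
    {γ : Set (Y × Y)} (hγ : γ ∈ 𝓤 Y) :
    ∃ δ ∈ 𝓤 Y, δ ⊆ γ ∧ (∀ p q : Y, (p, q) ∈ δ → (q, p) ∈ δ) ∧
      ∀ p q : Y, (p, q) ∈ δ → ∀ t : T, (t • p, t • q) ∈ δ := by
  have hγ' : SetRel.symmetrize γ ∈ 𝓤 Y := symmetrize_mem_uniformity hγ
  have hγ'sub : SetRel.symmetrize γ ⊆ γ := SetRel.symmetrize_subset_self
  have hγ'symm : ∀ p q : Y, (p, q) ∈ SetRel.symmetrize γ → (q, p) ∈ SetRel.symmetrize γ := by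
    intro p q h
    exact ⟨h.2, h.1⟩
  obtain ⟨δ₀, hδ₀, hδ₀γ⟩ := hYeq (SetRel.symmetrize γ) hγ'
  refine ⟨{p : Y × Y | p ∈ SetRel.symmetrize γ ∧
      ∀ t : T, (t • p.1, t • p.2) ∈ SetRel.symmetrize γ}, ?_, ?_, ?_, ?_⟩
  · exact Filter.mem_of_superset (Filter.inter_mem hγ' hδ₀)
      (fun p hp => ⟨hp.1, fun t => hδ₀γ p hp.2 t⟩)
  · exact fun p hp => hγ'sub hp.1
  · exact fun p q hpq => ⟨hγ'symm _ _ hpq.1, fun t => hγ'symm _ _ (hpq.2 t)⟩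
  · intro p q hpq t
    refine ⟨hpq.2 t, fun s => ?_⟩
    have := hpq.2 (s * t)
    simpa [mul_smul] using this

/-- Return lemma: for an invariant entourage `δ`, a surjective action on a compact space
comes back `δ`-close simultaneously at two points, along a positive power. -/
lemma return_pair [CompactSpace Y]
    (hYsurj : ∀ t : T, Function.Surjective fun z : Y => t • z)
    {δ : Set (Y × Y)} (hδ : δ ∈ 𝓤 Y)
    (hinv : ∀ p q : Y, (p, q) ∈ δ → ∀ t : T, (t • p, t • q) ∈ δ)
    (t : T) (u v : Y) :
    ∃ r : ℕ, 1 ≤ r ∧ (t ^ r • u, u) ∈ δ ∧ (t ^ r • v, v) ∈ δ := by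
  obtain ⟨d, hd, hdsymm, hdd⟩ := comp_symm_mem_uniformity_sets hδ
  obtain ⟨F, hFfin, hFcov⟩ := (isCompact_univ (X := Y)).totallyBounded d hd
  choose w hwspec using fun n : ℕ => hYsurj (t ^ n) u
  choose x hxspec using fun n : ℕ => hYsurj (t ^ n) v
  have hcov : ∀ z : Y, ∃ y ∈ F, (z, y) ∈ d := by
    intro z
    have := hFcov (Set.mem_univ z)
    simpa using this
  choose yw hywF hywd using fun n : ℕ => hcov (w n)
  choose yx hyxF hyxd using fun n : ℕ => hcov (x n)
  have hfin : (F ×ˢ F).Finite := hFfin.prod hFfin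
  obtain ⟨m, -, n, -, hmn, heq⟩ :=
    Set.infinite_univ.exists_ne_map_eq_of_mapsTo
      (f := fun n : ℕ => ((yw n, yx n) : Y × Y))
      (fun n _ => Set.mk_mem_prod (hywF n) (hyxF n)) hfin
  have key : ∀ (m n : ℕ), m < n → ∀ (u : Y) (w : ℕ → Y) (yw : ℕ → Y),
      (∀ k, t ^ k • w k = u) → (∀ k, (w k, yw k) ∈ d) → yw m = yw n →
      (t ^ (n - m) • u, u) ∈ δ := by
    intro m n hmn u w yw hw hywd hyweq
    have h1 : (w m, w n) ∈ δ := by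
      refine hdd (SetRel.prodMk_mem_comp (hywd m) ?_)
      rw [hyweq]
      exact hdsymm.symm _ _ (hywd n)
    have h2 : (u, t ^ m • w n) ∈ δ := by
      have := hinv _ _ h1 (t ^ m)
      rwa [hw m] at this
    have h3 := hinv _ _ h2 (t ^ (n - m))
    rwa [smul_smul, ← pow_add, Nat.sub_add_cancel hmn.le, hw n] at h3
  rcases hmn.lt_or_gt with h | h
  · have heq1 : yw m = yw n := congrArg Prod.fst heq
    have heq2 : yx m = yx n := congrArg Prod.snd heq
    exact ⟨n - m, Nat.one_le_iff_ne_zero.mpr (Nat.sub_ne_zero_of_lt h),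
      key m n h u w yw hwspec hywd heq1, key m n h v x yx hxspec hyxd heq2⟩
  · have heq1 : yw n = yw m := (congrArg Prod.fst heq).symm
    have heq2 : yx n = yx m := (congrArg Prod.snd heq).symm
    exact ⟨m - n, Nat.one_le_iff_ne_zero.mpr (Nat.sub_ne_zero_of_lt h),
      key n m h u w yw hwspec hywd heq1, key n m h v x yx hxspec hyxd heq2⟩

/-- Every point of an equicontinuous surjective semiflow on a compact Hausdorff space
is almost automorphic. -/
lemma claimA [CompactSpace Y] [T2Space Y]
    (hYeq : EquicontSF fun (t : T) (z : Y) => t • z)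
    (hYsurj : ∀ t : T, Function.Surjective fun z : Y => t • z)
    {ι : Type w'} [Preorder ι] [IsDirected ι (· ≤ ·)] [Nonempty ι]
    (tt : ι → T) (bn : ι → Y) (a b c : Y)
    (h1 : Tendsto (fun n => tt n • a) atTop (𝓝 c))
    (h2 : Tendsto bn atTop (𝓝 b))
    (h3 : ∀ n, tt n • bn n = c) : a = b := by
  refine eq_of_uniformity fun {V} hV => ?_
  obtain ⟨V₁, ⟨hV₁, hV₁closed⟩, hV₁V⟩ := uniformity_hasBasis_closed.mem_iff.mp hV
  obtain ⟨d, hdmem, -, hdd⟩ := comp_symm_mem_uniformity_sets hV₁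
  obtain ⟨d', hd'mem, -, hd'd⟩ := comp_symm_mem_uniformity_sets hdmem
  obtain ⟨δ, hδ, hδsub, hsymm, hinv⟩ := exists_invariant_core hYeq hd'mem
  have hδd' : δ ⊆ d' := hδsub
  have hd'sub : d' ⊆ d := by
    intro p hp
    exact hd'd (SetRel.prodMk_mem_comp (refl_mem_uniformity hd'mem) hp)
  have hev : ∀ᶠ n in atTop, tt n • a ∈ UniformSpace.ball c δ :=
    h1.eventually_mem (UniformSpace.ball_mem_nhds c hδ)
  have hev2 : ∀ᶠ n in atTop, (a, bn n) ∈ V₁ := by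
    filter_upwards [hev] with n hn
    have h5 : (tt n • a, tt n • bn n) ∈ δ := by
      rw [h3 n]
      exact hsymm _ _ hn
    obtain ⟨r, hr1, hra, hrb⟩ := return_pair hYsurj hδ hinv (tt n) a (bn n)
    have h6 : (tt n ^ r • a, tt n ^ r • bn n) ∈ δ := by
      have := hinv _ _ h5 (tt n ^ (r - 1))
      rwa [smul_smul, smul_smul, ← pow_succ, Nat.sub_add_cancel hr1] at this
    have c1 : (a, tt n ^ r • bn n) ∈ d :=
      hd'd (SetRel.prodMk_mem_comp (hδd' (hsymm _ _ hra)) (hδd' h6))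
    exact hdd (SetRel.prodMk_mem_comp c1 (hd'sub (hδd' hrb)))
  have hlim : Tendsto (fun n => ((a, bn n) : Y × Y)) atTop (𝓝 (a, b)) :=
    tendsto_const_nhds.prodMk_nhds h2
  exact hV₁V (hV₁closed.mem_of_tendsto hlim hev2)

/-- A point with a singleton fiber over an equicontinuous surjective factor is a.a. -/
lemma fiber_singleton_aa {T : Type u'} {X' : Type x'} [Monoid T]
    [TopologicalSpace X'] [UniformSpace Y] [CompactSpace Y] [T2Space Y]
    [MulAction T X'] [MulAction T Y]
    (π : X' → Y) (hcont : Continuous π)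
    (hequivar : ∀ (t : T) (z : X'), π (t • z) = t • π z)
    (hYeq : EquicontSF fun (t : T) (z : Y) => t • z)
    (hYsurj : ∀ t : T, Function.Surjective fun z : Y => t • z)
    (x : X') (hx : ∀ z : X', π z = π x → z = x) :
    IsAAPointVia (fun (t : T) (z : X') => t • z) x := by
  intro ι iP iD iN t xn y x' h1 h2 h3
  have hA : Tendsto (fun n => t n • π x) atTop (𝓝 (π y)) := by
    have := (hcont.tendsto y).comp h1
    simpa [Function.comp_def, hequivar] using this
  have hB : Tendsto (fun n => π (xn n)) atTop (𝓝 (π x')) := (hcont.tendsto x').comp h2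
  have hC : ∀ n, t n • π (xn n) = π y := by
    intro n
    rw [← hequivar]
    exact congrArg π (h3 n)
  have hb : π x = π x' := claimA hYeq hYsurj t (fun n => π (xn n)) (π x) (π x') (π y) hA hB hC
  exact (hx x' hb.symm).symm

end AAAux


/-- Let `(T,X)` and `(T,Y)` be minimal semiflows. If `π : (T,X) → (T,Y)` is an almost 1-1
epimorphism and `(T,Y)` is equicontinuous and surjective, then `(T,X)` is an a.a. semiflow
and `{x : π⁻¹[{π x}] = {x}} ⊆ P_aa(T,X)`. -/
theorem almost_one_one_extension_of_equicontinuous_is_aa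
    {T : Type u} {X : Type v} {Y : Type v} [Monoid T] [TopologicalSpace T] [ContinuousMul T]
    [UniformSpace X] [CompactSpace X] [T2Space X] [Nonempty X]
    [MulAction T X] [ContinuousSMul T X]
    [UniformSpace Y] [CompactSpace Y] [T2Space Y] [Nonempty Y]
    [MulAction T Y] [ContinuousSMul T Y]
    (hminX : MinimalSF fun (t : T) (z : X) => t • z)
    (hminY : MinimalSF fun (t : T) (z : Y) => t • z)
    (π : X → Y) (hcont : Continuous π) (hsurjπ : Function.Surjective π)
    (hequivar : ∀ (t : T) (z : X), π (t • z) = t • π z)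
    (ha11 : ∃ y : Y, ∃! z : X, π z = y)
    (hYeq : EquicontSF fun (t : T) (z : Y) => t • z)
    (hYsurj : ∀ t : T, Function.Surjective fun z : Y => t • z) :
    (∃ x : X, IsAAPointVia (fun (t : T) (z : X) => t • z) x ∧
        Dense (orbitVia (fun (t : T) (z : X) => t • z) x)) ∧
      ∀ x : X, (∀ x' : X, π x' = π x → x' = x) →
        IsAAPointVia (fun (t : T) (z : X) => t • z) x := by
  obtain ⟨y₀, x₀, hπx₀, huniq⟩ := ha11
  have hfib : ∀ z : X, π z = π x₀ → z = x₀ := fun z h => huniq z (show π z = y₀ by rw [h, hπx₀])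
  exact ⟨⟨x₀, fiber_singleton_aa π hcont hequivar hYeq hYsurj x₀ hfib, hminX x₀⟩,
    fun x hx => fiber_singleton_aa π hcont hequivar hYeq hYsurj x hx⟩
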